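/- Let a < b be consecutive positive zeros of J₁ with J₁ < 0 on (a,b), and let m ≥ 4 with J_m > 0 on (0,b]. Suppose in addition J₁ > 0 on (0,a). Then the function μ ↦ μ·W_{1,m}(μ), where W_{1,m} = J₁J_m' − J_mJ₁', is strictly increasing on (0,a) and strictly decreasing on (a,b). -/

import Mathlib

open Set

/-- The Bessel function of the first kind of integer order `k`, via its power series. -/
noncomputable def besselJ (k : ℕ) (x : ℝ) : ℝ :=
  ∑' j : ℕ, (-1 : ℝ) ^ j * (x / 2) ^ (2 * j + k) / (j.factorial * (j + k).factorial)


noncomputable def bJ (k j : ℕ) (x : ℝ) : ℝ :=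
  (-1 : ℝ) ^ j * (x / 2) ^ (2 * j + k) / (j.factorial * (j + k).factorial)

noncomputable def bJ' (k j : ℕ) (x : ℝ) : ℝ :=
  ((-1 : ℝ) ^ j * (2 * j + k : ℕ) / (2 * (j.factorial * (j + k).factorial))) *
    (x / 2) ^ (2 * j + k - 1)

noncomputable def bJ'' (k j : ℕ) (x : ℝ) : ℝ :=
  ((-1 : ℝ) ^ j * (2 * j + k : ℕ) * (2 * j + k - 1 : ℕ) / (4 * (j.factorial * (j + k).factorial))) *
    (x / 2) ^ (2 * j + k - 2)

lemma fact_cast_pos (j : ℕ) : (0 : ℝ) < (j.factorial : ℝ) := by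
  exact_mod_cast j.factorial_pos

lemma nle (n : ℕ) : (n : ℝ) ≤ 2 ^ n := by
  exact_mod_cast (Nat.lt_two_pow_self (n := n)).le

lemma norm_bJ_le (k j : ℕ) {x R : ℝ} (hR : 1 ≤ R) (hx : |x| ≤ R) :
    ‖bJ k j x‖ ≤ R ^ k * ((R ^ 2) ^ j / j.factorial) := by
  have hR0 : (0:ℝ) ≤ R := by linarith
  have hxd : |x / 2| ≤ R := by
    rw [abs_div]; simp only [abs_two]
    calc |x| / 2 ≤ R / 2 := by linarith [abs_nonneg x]
    _ ≤ R := by linarith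
  have h1 : ‖bJ k j x‖ = |x / 2| ^ (2 * j + k) / ((j.factorial : ℝ) * (j + k).factorial) := by
    rw [bJ, Real.norm_eq_abs, abs_div, abs_mul, abs_pow, abs_neg, abs_one, one_pow, one_mul,
      abs_pow, abs_of_pos (by positivity : (0:ℝ) < (j.factorial : ℝ) * (j + k).factorial)]
  rw [h1]
  calc |x / 2| ^ (2 * j + k) / ((j.factorial : ℝ) * (j + k).factorial)
      ≤ R ^ (2 * j + k) / ((j.factorial : ℝ) * 1) := by
        gcongr <;> first
          | exact_mod_cast (j + k).factorial_pos
          | exact abs_nonneg _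
          | positivity
    _ = R ^ k * ((R ^ 2) ^ j / j.factorial) := by
        rw [mul_one, ← pow_mul, pow_add, mul_comm 2 j, mul_comm]
        ring

lemma norm_bJ'_le (k j : ℕ) {x R : ℝ} (hR : 1 ≤ R) (hx : |x| ≤ R) :
    ‖bJ' k j x‖ ≤ (2 * R) ^ k / 2 * (((2 * R) ^ 2) ^ j / j.factorial) := by
  have hR0 : (0:ℝ) < R := by linarith
  have hxd : |x / 2| ≤ R := by
    rw [abs_div]; simp only [abs_two]
    calc |x| / 2 ≤ R / 2 := by linarith [abs_nonneg x]
    _ ≤ R := by linarith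
  have h1 : ‖bJ' k j x‖ =
      (2 * j + k : ℕ) / (2 * ((j.factorial : ℝ) * (j + k).factorial)) * |x / 2| ^ (2 * j + k - 1) := by
    rw [bJ', Real.norm_eq_abs, abs_mul, abs_pow, abs_div, abs_mul, abs_pow, abs_neg, abs_one,
      one_pow, one_mul, Nat.abs_cast,
      abs_of_pos (by positivity : (0:ℝ) < 2 * ((j.factorial : ℝ) * (j + k).factorial))]
  rw [h1]
  calc (2 * j + k : ℕ) / (2 * ((j.factorial : ℝ) * (j + k).factorial)) * |x / 2| ^ (2 * j + k - 1)
      ≤ (2 ^ (2 * j + k) : ℝ) / (2 * ((j.factorial : ℝ) * 1)) * R ^ (2 * j + k - 1) := by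
        gcongr <;> first
          | exact nle _
          | exact_mod_cast (j + k).factorial_pos
          | exact abs_nonneg _
          | positivity
    _ ≤ (2 ^ (2 * j + k) : ℝ) / (2 * ((j.factorial : ℝ) * 1)) * R ^ (2 * j + k) := by
        gcongr
        · exact Nat.sub_le _ _
    _ = (2 * R) ^ k / 2 * (((2 * R) ^ 2) ^ j / j.factorial) := by
        field_simp
        ring_nf
        rw [show (4:ℝ) ^ j = 2 ^ (2 * j) by rw [pow_mul]; norm_num]
        ring

lemma norm_bJ''_le (k j : ℕ) {x R : ℝ} (hR : 1 ≤ R) (hx : |x| ≤ R) :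
    ‖bJ'' k j x‖ ≤ (4 * R) ^ k / 4 * (((4 * R) ^ 2) ^ j / j.factorial) := by
  have hR0 : (0:ℝ) < R := by linarith
  have hxd : |x / 2| ≤ R := by
    rw [abs_div]; simp only [abs_two]
    calc |x| / 2 ≤ R / 2 := by linarith [abs_nonneg x]
    _ ≤ R := by linarith
  have h1 : ‖bJ'' k j x‖ =
      (2 * j + k : ℕ) * (2 * j + k - 1 : ℕ) / (4 * ((j.factorial : ℝ) * (j + k).factorial)) *
        |x / 2| ^ (2 * j + k - 2) := by
    rw [bJ'', Real.norm_eq_abs, abs_mul, abs_pow, abs_div, abs_mul, abs_mul, abs_pow, abs_neg,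
      abs_one, one_pow, one_mul, Nat.abs_cast, Nat.abs_cast,
      abs_of_pos (by positivity : (0:ℝ) < 4 * ((j.factorial : ℝ) * (j + k).factorial))]
  rw [h1]
  calc (2 * j + k : ℕ) * (2 * j + k - 1 : ℕ) / (4 * ((j.factorial : ℝ) * (j + k).factorial)) *
        |x / 2| ^ (2 * j + k - 2)
      ≤ ((2 ^ (2 * j + k) : ℝ) * 2 ^ (2 * j + k)) / (4 * ((j.factorial : ℝ) * 1)) *
        R ^ (2 * j + k - 2) := by
        gcongr <;> first
          | exact nle _
          | (exact le_trans (by exact_mod_cast Nat.cast_le.mpr (Nat.sub_le (2*j+k) 1)) (nle _))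
          | exact_mod_cast (j + k).factorial_pos
          | exact abs_nonneg _
          | positivity
    _ ≤ ((2 ^ (2 * j + k) : ℝ) * 2 ^ (2 * j + k)) / (4 * ((j.factorial : ℝ) * 1)) *
        R ^ (2 * j + k) := by
        gcongr
        · exact Nat.sub_le _ _
    _ = (4 * R) ^ k / 4 * (((4 * R) ^ 2) ^ j / j.factorial) := by
        field_simp
        ring_nf
        rw [show (4:ℝ) ^ k = 2 ^ (2 * k) by rw [pow_mul]; norm_num,
          show (16:ℝ) ^ j = 2 ^ (4 * j) by rw [pow_mul]; norm_num]
        ring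

lemma summable_u (c : ℝ) : Summable (fun j : ℕ => c * ((c ^ 2) ^ j / j.factorial)) :=
  (Real.summable_pow_div_factorial (c ^ 2)).mul_left c

lemma summable_bJ (k : ℕ) (x : ℝ) : Summable (fun j => bJ k j x) := by
  have hR : (1:ℝ) ≤ |x| + 1 := by linarith [abs_nonneg x]
  apply Summable.of_norm
  apply Summable.of_nonneg_of_le (fun j => norm_nonneg _)
    (fun j => norm_bJ_le k j hR (by linarith))
  exact ((Real.summable_pow_div_factorial ((|x| + 1) ^ 2)).mul_left _)

lemma summable_bJ' (k : ℕ) (x : ℝ) : Summable (fun j => bJ' k j x) := by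
  have hR : (1:ℝ) ≤ |x| + 1 := by linarith [abs_nonneg x]
  apply Summable.of_norm
  apply Summable.of_nonneg_of_le (fun j => norm_nonneg _)
    (fun j => norm_bJ'_le k j hR (by linarith))
  exact ((Real.summable_pow_div_factorial ((2 * (|x| + 1)) ^ 2)).mul_left _)

lemma summable_bJ'' (k : ℕ) (x : ℝ) : Summable (fun j => bJ'' k j x) := by
  have hR : (1:ℝ) ≤ |x| + 1 := by linarith [abs_nonneg x]
  apply Summable.of_norm
  apply Summable.of_nonneg_of_le (fun j => norm_nonneg _)
    (fun j => norm_bJ''_le k j hR (by linarith))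
  exact ((Real.summable_pow_div_factorial ((4 * (|x| + 1)) ^ 2)).mul_left _)

noncomputable def besselJD (k : ℕ) (x : ℝ) : ℝ := ∑' j, bJ' k j x
noncomputable def besselJDD (k : ℕ) (x : ℝ) : ℝ := ∑' j, bJ'' k j x

lemma hasDerivAt_bJ (k j : ℕ) (x : ℝ) : HasDerivAt (fun y => bJ k j y) (bJ' k j x) x := by
  have h := ((((hasDerivAt_id x).div_const 2).pow (2 * j + k)).const_mul
      ((-1 : ℝ) ^ j)).div_const ((j.factorial * (j + k).factorial : ℝ))
  simp only [Pi.pow_apply, id_eq] at h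
  refine h.congr_deriv ?_
  simp only [bJ', id_eq]
  ring

lemma hasDerivAt_bJ' (k j : ℕ) (x : ℝ) : HasDerivAt (fun y => bJ' k j y) (bJ'' k j x) x := by
  have h := (((hasDerivAt_id x).div_const 2).pow (2 * j + k - 1)).const_mul
      ((-1 : ℝ) ^ j * (2 * j + k : ℕ) / (2 * (j.factorial * (j + k).factorial)))
  simp only [Pi.pow_apply, id_eq] at h
  refine h.congr_deriv ?_
  simp only [bJ'', id_eq, Nat.sub_sub]
  ring

lemma hasDerivAt_besselJD (k : ℕ) (x : ℝ) :
    HasDerivAt (besselJD k) (besselJDD k x) x := by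
  have hball : x ∈ Metric.ball (0:ℝ) (|x| + 1) := by
    simp [Real.dist_eq, abs_nonneg]
  have hR : (1:ℝ) ≤ |x| + 1 := by linarith [abs_nonneg x]
  exact hasDerivAt_tsum_of_isPreconnected
    ((Real.summable_pow_div_factorial ((4 * (|x| + 1)) ^ 2)).mul_left ((4 * (|x| + 1)) ^ k / 4))
    Metric.isOpen_ball (convex_ball (0:ℝ) (|x| + 1)).isPreconnected
    (fun j y _ => hasDerivAt_bJ' k j y)
    (fun j y hy => norm_bJ''_le k j hR (by
      have := mem_ball_iff_norm.mp hy
      simp only [sub_zero, Real.norm_eq_abs] at this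
      linarith))
    hball (summable_bJ' k x) hball

lemma hasDerivAt_besselJ (k : ℕ) (x : ℝ) :
    HasDerivAt (besselJ k) (besselJD k x) x := by
  have hball : x ∈ Metric.ball (0:ℝ) (|x| + 1) := by
    simp [Real.dist_eq, abs_nonneg]
  have hR : (1:ℝ) ≤ |x| + 1 := by linarith [abs_nonneg x]
  exact hasDerivAt_tsum_of_isPreconnected
    ((Real.summable_pow_div_factorial ((2 * (|x| + 1)) ^ 2)).mul_left ((2 * (|x| + 1)) ^ k / 2))
    Metric.isOpen_ball (convex_ball (0:ℝ) (|x| + 1)).isPreconnected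
    (fun j y _ => hasDerivAt_bJ k j y)
    (fun j y hy => norm_bJ'_le k j hR (by
      have := mem_ball_iff_norm.mp hy
      simp only [sub_zero, Real.norm_eq_abs] at this
      linarith))
    hball (summable_bJ k x) hball

noncomputable def bA (k j : ℕ) (x : ℝ) : ℝ :=
  (-1 : ℝ) ^ j * (4 * j * (j + k)) * (x / 2) ^ (2 * j + k) / (j.factorial * (j + k).factorial)

lemma term_id (k j : ℕ) (x : ℝ) :
    x ^ 2 * bJ'' k j x + x * bJ' k j x + (x ^ 2 - (k : ℝ) ^ 2) * bJ k j x
      = bA k j x + x ^ 2 * bJ k j x := by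
  unfold bA bJ bJ' bJ''
  rcases j with _ | j
  · rcases k with _ | _ | k
    · norm_num
    · norm_num; ring
    · rw [show 2 * 0 + (k + 2) - 1 = k + 1 from by omega,
        show 2 * 0 + (k + 2) - 2 = k from by omega,
        show 2 * 0 + (k + 2) = k + 2 from by omega]
      push_cast
      ring
  · rw [show 2 * (j + 1) + k - 1 = 2 * j + k + 1 from by omega,
      show 2 * (j + 1) + k - 2 = 2 * j + k from by omega,
      show 2 * (j + 1) + k = 2 * j + k + 2 from by omega]
    push_cast
    ring

lemma bA_zero (k : ℕ) (x : ℝ) : bA k 0 x = 0 := by simp [bA]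

lemma bA_succ (k j : ℕ) (x : ℝ) : bA k (j + 1) x = -(x ^ 2 * bJ k j x) := by
  unfold bA bJ
  rw [show j + 1 + k = (j + k) + 1 from by omega, Nat.factorial_succ, Nat.factorial_succ,
    show 2 * (j + 1) + k = (2 * j + k) + 2 from by omega]
  have h1 : ((j : ℝ) + 1) ≠ 0 := by positivity
  have h2 : ((j : ℝ) + (k : ℝ) + 1) ≠ 0 := by positivity
  have h3 : ((j.factorial : ℝ)) ≠ 0 := by positivity
  have h4 : (((j + k).factorial : ℝ)) ≠ 0 := by positivity
  push_cast
  field_simp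
  ring

lemma besselJ_ode (k : ℕ) (x : ℝ) :
    x ^ 2 * besselJDD k x + x * besselJD k x + (x ^ 2 - (k : ℝ) ^ 2) * besselJ k x = 0 := by
  have hS := summable_bJ k x
  have hS' := summable_bJ' k x
  have hS'' := summable_bJ'' k x
  have hA1 : Summable (fun j => bA k (j + 1) x) :=
    ((hS.mul_left (x ^ 2)).neg).congr (fun j => (bA_succ k j x).symm)
  have hA : Summable (fun j => bA k j x) := (summable_nat_add_iff 1).mp hA1
  have hJeq : besselJ k x = ∑' j, bJ k j x := rfl
  rw [hJeq, besselJD, besselJDD, ← tsum_mul_left, ← tsum_mul_left, ← tsum_mul_left,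
    ← Summable.tsum_add (hS''.mul_left _) (hS'.mul_left _),
    ← Summable.tsum_add ((hS''.mul_left _).add (hS'.mul_left _)) (hS.mul_left _)]
  have key : ∀ j, x ^ 2 * bJ'' k j x + x * bJ' k j x + (x ^ 2 - (k : ℝ) ^ 2) * bJ k j x
      = bA k j x + x ^ 2 * bJ k j x := fun j => term_id k j x
  rw [tsum_congr key, Summable.tsum_add hA (hS.mul_left _), Summable.tsum_eq_zero_add hA, bA_zero,
    tsum_congr (fun j => bA_succ k j x), tsum_neg, tsum_mul_left]
  ring

lemma hasDerivAt_muW (m : ℕ) {μ : ℝ} (hμ : μ ≠ 0) :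
    HasDerivAt
      (fun μ => μ * (besselJ 1 μ * besselJD m μ - besselJ m μ * besselJD 1 μ))
      (((m : ℝ) ^ 2 - 1) / μ * (besselJ 1 μ * besselJ m μ)) μ := by
  have h1 := hasDerivAt_besselJ 1 μ
  have hm := hasDerivAt_besselJ m μ
  have h1' := hasDerivAt_besselJD 1 μ
  have hm' := hasDerivAt_besselJD m μ
  have hW := (h1.mul hm').sub (hm.mul h1')
  have := (hasDerivAt_id μ).mul hW
  refine this.congr_deriv ?_
  have E1 := besselJ_ode 1 μ
  have Em := besselJ_ode m μ
  push_cast at E1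
  simp only [id_eq, Pi.mul_apply, Pi.sub_apply]
  field_simp
  linear_combination besselJ 1 μ * Em - besselJ m μ * E1

/-- With `a < b` consecutive positive zeros of `J₁`, `J₁ > 0` on `(0,a)`, `J₁ < 0` on
`(a,b)`, and `J_m > 0` on `(0,b]` for some `m ≥ 4`, the function `μ ↦ μ·W_{1,m}(μ)` is
strictly increasing on `(0,a)` and strictly decreasing on `(a,b)`. -/
theorem muW_monotone (m : ℕ) (hm : 4 ≤ m) (a b : ℝ) (ha : 0 < a) (hab : a < b)
    (hJ1a : besselJ 1 a = 0) (hJ1b : besselJ 1 b = 0)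
    (hJ1pos : ∀ μ ∈ Ioo 0 a, 0 < besselJ 1 μ)
    (hJ1neg : ∀ μ ∈ Ioo a b, besselJ 1 μ < 0)
    (hJmpos : ∀ μ ∈ Ioc 0 b, 0 < besselJ m μ) :
    StrictMonoOn
      (fun μ => μ * (besselJ 1 μ * deriv (besselJ m) μ - besselJ m μ * deriv (besselJ 1) μ))
      (Ioo 0 a) ∧
    StrictAntiOn
      (fun μ => μ * (besselJ 1 μ * deriv (besselJ m) μ - besselJ m μ * deriv (besselJ 1) μ))
      (Ioo a b) := by
  have hd : ∀ k : ℕ, deriv (besselJ k) = besselJD k :=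
    fun k => funext fun x => (hasDerivAt_besselJ k x).deriv
  have hm1 : (1:ℝ) < (m : ℝ) ^ 2 := by
    have : (4:ℝ) ≤ (m : ℝ) := by exact_mod_cast hm
    nlinarith
  have hderiv : ∀ μ : ℝ, μ ≠ 0 →
      deriv (fun μ => μ * (besselJ 1 μ * besselJD m μ - besselJ m μ * besselJD 1 μ)) μ
        = ((m : ℝ) ^ 2 - 1) / μ * (besselJ 1 μ * besselJ m μ) :=
    fun μ hμ => (hasDerivAt_muW m hμ).deriv
  have hcont : ∀ s : Set ℝ, ContinuousOn
      (fun μ => μ * (besselJ 1 μ * besselJD m μ - besselJ m μ * besselJD 1 μ)) s := by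
    intro s
    apply ContinuousOn.mul continuousOn_id
    apply ContinuousOn.sub
    · exact ContinuousOn.mul
        (fun x _ => (hasDerivAt_besselJ 1 x).continuousAt.continuousWithinAt)
        (fun x _ => (hasDerivAt_besselJD m x).continuousAt.continuousWithinAt)
    · exact ContinuousOn.mul
        (fun x _ => (hasDerivAt_besselJ m x).continuousAt.continuousWithinAt)
        (fun x _ => (hasDerivAt_besselJD 1 x).continuousAt.continuousWithinAt)
  simp only [hd]
  constructor
  · apply strictMonoOn_of_deriv_pos (convex_Ioo 0 a) (hcont _)
    intro μ hμ
    rw [interior_Ioo] at hμ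
    obtain ⟨h0, hlt⟩ := hμ
    rw [hderiv μ (ne_of_gt h0)]
    have hJm := hJmpos μ ⟨h0, by linarith⟩
    have hJ1 := hJ1pos μ ⟨h0, hlt⟩
    have hc : 0 < ((m : ℝ) ^ 2 - 1) / μ := div_pos (by linarith) h0
    exact mul_pos hc (mul_pos hJ1 hJm)
  · apply strictAntiOn_of_deriv_neg (convex_Ioo a b) (hcont _)
    intro μ hμ
    rw [interior_Ioo] at hμ
    obtain ⟨hgt, hlt⟩ := hμ
    rw [hderiv μ (ne_of_gt (lt_trans ha hgt))]
    have hJm := hJmpos μ ⟨by linarith, le_of_lt hlt⟩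
    have hJ1 := hJ1neg μ ⟨hgt, hlt⟩
    have h2 : 0 < ((m : ℝ) ^ 2 - 1) / μ := by
      apply div_pos (by linarith) (by linarith)
    have := mul_pos h2 (mul_pos (neg_pos.mpr hJ1) hJm)
    nlinarith
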